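/- Let ω be the standard symplectic form on ℝ^{2n}. For a symplectic basis (e₁,…,e_{2n}), let B = ℙ(ℝ_{>0}-span(e₁,…,e_{2n})) be the associated open symplectic simplex in ℙ(ℝ^{2n}), and let B* = {[v] ∈ ℙ(ℝ^{2n}) : ℙ(v^⊥) ∩ cl(B) = ∅} where v^⊥ is the ω-orthogonal of v. Then B* is again a symplectic simplex, namely the one associated to the symplectic basis (e_{2n}, −e_{2n−1}, …, e₂, −e₁). -/

import Mathlib

open LinearAlgebra.Projectivization Projectivization

/-- The quotient topology on projective space. -/
noncomputable instance (n : ℕ) : TopologicalSpace (Projectivization ℝ (Fin n → ℝ)) :=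
  instTopologicalSpaceQuotient

/-- The standard symplectic form `ω(v,v′) = Σᵢ (−1)ⁱ vᵢ v′_{2n+1−i}` on `ℝ^{2n}`
(0-indexed version). -/
def symplForm (n : ℕ) (v w : Fin (2 * n) → ℝ) : ℝ :=
  ∑ j : Fin (2 * n), (-1 : ℝ) ^ ((j : ℕ) + 1) * v j * w (Fin.rev j)

/-- A symplectic basis of `ℝ^{2n}`: a basis in which the matrix of `ω` is antidiagonal
with alternating entries `±1` (normalized so that the canonical basis is symplectic). -/
def IsSymplecticBasis (n : ℕ) (e : Fin (2 * n) → (Fin (2 * n) → ℝ)) : Prop :=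
  LinearIndependent ℝ e ∧ Submodule.span ℝ (Set.range e) = ⊤ ∧
    ∀ i j : Fin (2 * n), symplForm n (e i) (e j)
      = if j = Fin.rev i then (-1 : ℝ) ^ ((i : ℕ) + 1) else 0

/-- The open symplectic simplex `B = ℙ(ℝ_{>0}-span(e₁,…,e_{2n}))` in `ℙ(ℝ^{2n})`
associated to a symplectic basis `e`. -/
def symplSimplex (n : ℕ) (e : Fin (2 * n) → (Fin (2 * n) → ℝ)) :
    Set (Projectivization ℝ (Fin (2 * n) → ℝ)) :=
  {P | ∃ (v : Fin (2 * n) → ℝ) (hv : v ≠ 0),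
    (∃ c : Fin (2 * n) → ℝ, (∀ i, 0 < c i) ∧ v = ∑ i, c i • e i) ∧
    P = Projectivization.mk ℝ v hv}

/-- The dual `B* = {[v] : ℙ(v^⊥) ∩ cl(B) = ∅}` of a subset `B` of `ℙ(ℝ^{2n})`, where
`v^⊥` is the `ω`-orthogonal hyperplane of `v`. -/
def symplDual (n : ℕ) (B : Set (Projectivization ℝ (Fin (2 * n) → ℝ))) :
    Set (Projectivization ℝ (Fin (2 * n) → ℝ)) :=
  {P | ∃ (v : Fin (2 * n) → ℝ) (hv : v ≠ 0), P = Projectivization.mk ℝ v hv ∧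
    ∀ Q ∈ closure B, ∀ (w : Fin (2 * n) → ℝ) (hw : w ≠ 0),
      Q = Projectivization.mk ℝ w hw → symplForm n v w ≠ 0}

section Aux


lemma symplForm_smul_left (n : ℕ) (c : ℝ) (v w : Fin (2 * n) → ℝ) :
    symplForm n (c • v) w = c * symplForm n v w := by
  simp only [symplForm, Pi.smul_apply, smul_eq_mul, Finset.mul_sum]
  exact Finset.sum_congr rfl fun j _ => by ring

lemma symplForm_smul_right (n : ℕ) (c : ℝ) (v w : Fin (2 * n) → ℝ) :
    symplForm n v (c • w) = c * symplForm n v w := by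
  simp only [symplForm, Pi.smul_apply, smul_eq_mul, Finset.mul_sum]
  exact Finset.sum_congr rfl fun j _ => by ring

lemma symplForm_sum_left {ι : Type*} (n : ℕ) (s : Finset ι) (u : ι → Fin (2 * n) → ℝ)
    (w : Fin (2 * n) → ℝ) :
    symplForm n (∑ i ∈ s, u i) w = ∑ i ∈ s, symplForm n (u i) w := by
  simp only [symplForm, Finset.sum_apply, Finset.mul_sum, Finset.sum_mul]
  rw [Finset.sum_comm]

lemma symplForm_sum_right {ι : Type*} (n : ℕ) (s : Finset ι) (u : ι → Fin (2 * n) → ℝ)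
    (v : Fin (2 * n) → ℝ) :
    symplForm n v (∑ i ∈ s, u i) = ∑ i ∈ s, symplForm n v (u i) := by
  simp only [symplForm, Finset.sum_apply, Finset.mul_sum, Finset.sum_mul]
  rw [Finset.sum_comm]

lemma symplForm_lin (n : ℕ) (a d : Fin (2 * n) → ℝ) (u w : Fin (2 * n) → (Fin (2 * n) → ℝ)) :
    symplForm n (∑ i, a i • u i) (∑ j, d j • w j)
      = ∑ i, ∑ j, a i * d j * symplForm n (u i) (w j) := by
  rw [symplForm_sum_left]
  refine Finset.sum_congr rfl fun i _ => ?_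
  rw [symplForm_smul_left, symplForm_sum_right, Finset.mul_sum]
  refine Finset.sum_congr rfl fun j _ => ?_
  rw [symplForm_smul_right]; ring

lemma neg_one_pow_eq_of_even_add {a b : ℕ} (h : Even (a + b)) : (-1 : ℝ) ^ a = (-1 : ℝ) ^ b := by
  have h1 : (-1 : ℝ) ^ (a + b) = 1 := h.neg_one_pow
  have h2 : (-1 : ℝ) ^ (b + b) = 1 := (Even.add_self b).neg_one_pow
  calc (-1 : ℝ) ^ a = (-1 : ℝ) ^ a * (-1 : ℝ) ^ (b + b) := by rw [h2, mul_one]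
    _ = (-1 : ℝ) ^ (a + b) * (-1 : ℝ) ^ b := by rw [pow_add, pow_add]; ring
    _ = (-1 : ℝ) ^ b := by rw [h1, one_mul]

end Aux

/-- The dual of the symplectic simplex associated to a symplectic basis
`(e₁, …, e_{2n})` is again a symplectic simplex, namely the one associated to the
symplectic basis `(e_{2n}, −e_{2n−1}, …, e₂, −e₁)`. -/
theorem symplDual_symplSimplex (n : ℕ) (e : Fin (2 * n) → (Fin (2 * n) → ℝ))
    (he : IsSymplecticBasis n e) :
    IsSymplecticBasis n (fun j => (-1 : ℝ) ^ (j : ℕ) • e (Fin.rev j)) ∧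
    symplDual n (symplSimplex n e)
      = symplSimplex n (fun j => (-1 : ℝ) ^ (j : ℕ) • e (Fin.rev j)) := by
  obtain ⟨hli, hspan, hω⟩ := he
  set f : Fin (2 * n) → (Fin (2 * n) → ℝ) := fun j => (-1 : ℝ) ^ (j : ℕ) • e (Fin.rev j) with hf
  have hrevsum : ∀ j : Fin (2 * n), (j : ℕ) + ((Fin.rev j : Fin (2 * n)) : ℕ) + 1 = 2 * n := by
    intro j
    have h1 := j.isLt
    simp only [Fin.val_rev]
    omega
  -- ω(f j, e i) = δ_{ij}
  have hfe : ∀ j i, symplForm n (f j) (e i) = if i = j then 1 else 0 := by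
    intro j i
    rw [show f j = ((-1 : ℝ) ^ (j : ℕ)) • e (Fin.rev j) from rfl, symplForm_smul_left, hω,
      Fin.rev_rev]
    by_cases h : i = j
    · rw [if_pos h, if_pos h, ← pow_add]
      have h2n : (j : ℕ) + (((Fin.rev j : Fin (2 * n)) : ℕ) + 1) = 2 * n := by
        have := hrevsum j; omega
      rw [h2n]
      exact Even.neg_one_pow ⟨n, by ring⟩
    · rw [if_neg h, if_neg h, mul_zero]
  have hA : IsSymplecticBasis n f := by
    refine ⟨?_, ?_, ?_⟩
    · have h1 : LinearIndependent ℝ (e ∘ Fin.rev) := hli.comp _ Fin.rev_injective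
      have h2 := h1.units_smul fun j : Fin (2 * n) => (-1 : ℝˣ) ^ (j : ℕ)
      have h3 : (fun j : Fin (2 * n) => (-1 : ℝˣ) ^ (j : ℕ)) • (e ∘ Fin.rev) = f := by
        funext j
        simp [hf, Units.smul_def]
      rwa [h3] at h2
    · rw [eq_top_iff, ← hspan, Submodule.span_le]
      rintro x ⟨i, rfl⟩
      have hx : e i = (-1 : ℝ) ^ ((Fin.rev i : Fin (2 * n)) : ℕ) • f (Fin.rev i) := by
        rw [show f (Fin.rev i)
            = ((-1 : ℝ) ^ ((Fin.rev i : Fin (2 * n)) : ℕ)) • e (Fin.rev (Fin.rev i)) from rfl,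
          Fin.rev_rev, smul_smul, ← pow_add]
        rw [(Even.add_self _).neg_one_pow, one_smul]
      rw [hx]
      exact Submodule.smul_mem _ _ (Submodule.subset_span ⟨Fin.rev i, rfl⟩)
    · intro i j
      rw [show f j = ((-1 : ℝ) ^ (j : ℕ)) • e (Fin.rev j) from rfl, symplForm_smul_right, hfe]
      by_cases h : j = Fin.rev i
      · rw [if_pos, if_pos h, mul_one]
        · subst h
          exact neg_one_pow_eq_of_even_add (by
            rw [show ((Fin.rev i : Fin (2 * n)) : ℕ) + ((i : ℕ) + 1) = 2 * n from by
              have := hrevsum i; omega]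
            exact ⟨n, by ring⟩)
        · rw [h, Fin.rev_rev]
      · rw [if_neg, if_neg h, mul_zero]
        intro hc
        exact h (by rw [← hc, Fin.rev_rev])
  refine ⟨hA, ?_⟩
  -- bases
  obtain ⟨b, hbe⟩ : ∃ b : Module.Basis (Fin (2 * n)) ℝ (Fin (2 * n) → ℝ), ∀ i, b i = e i :=
    ⟨Module.Basis.mk hli hspan.ge, fun i => Module.Basis.mk_apply hli hspan.ge i⟩
  obtain ⟨b', hbf⟩ : ∃ b' : Module.Basis (Fin (2 * n)) ℝ (Fin (2 * n) → ℝ), ∀ i, b' i = f i :=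
    ⟨Module.Basis.mk hA.1 hA.2.1.ge, fun i => Module.Basis.mk_apply hA.1 hA.2.1.ge i⟩
  have hsum_e : ∀ x : Fin (2 * n) → ℝ, ∑ i, b.repr x i • e i = x := by
    intro x
    simpa only [hbe] using b.sum_repr x
  have hnz_e : ∀ c : Fin (2 * n) → ℝ, c ≠ 0 → (∑ i, c i • e i) ≠ 0 := by
    intro c hc h0
    exact hc (funext fun i => Fintype.linearIndependent_iff.mp hli c h0 i)
  -- the pairing identity
  have hpair : ∀ a d : Fin (2 * n) → ℝ,
      symplForm n (∑ i, a i • f i) (∑ j, d j • e j) = ∑ i, a i * d i := by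
    intro a d
    rw [symplForm_lin]
    refine Finset.sum_congr rfl fun i _ => ?_
    simp only [hfe, mul_ite, mul_one, mul_zero, Finset.sum_ite_eq', Finset.mem_univ, if_true]
  -- the closed "nonnegative" set S in vector space
  set S : Set (Fin (2 * n) → ℝ) :=
    {x | ∀ i, 0 ≤ b.repr x i} ∪ {x | ∀ i, b.repr x i ≤ 0} with hS
  have hSclosed : IsClosed S := by
    apply IsClosed.union
    · have h1 : {x : Fin (2 * n) → ℝ | ∀ i, 0 ≤ b.repr x i}
          = ⋂ i, {x | 0 ≤ b.coord i x} := by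
        ext x; simp [Module.Basis.coord_apply]
      rw [h1]
      exact isClosed_iInter fun i =>
        isClosed_le continuous_const (b.coord i).continuous_of_finiteDimensional
    · have h1 : {x : Fin (2 * n) → ℝ | ∀ i, b.repr x i ≤ 0}
          = ⋂ i, {x | b.coord i x ≤ 0} := by
        ext x; simp [Module.Basis.coord_apply]
      rw [h1]
      exact isClosed_iInter fun i =>
        isClosed_le (b.coord i).continuous_of_finiteDimensional continuous_const
  have hSsmul : ∀ (t : ℝ) (x : Fin (2 * n) → ℝ), x ∈ S → t • x ∈ S := by
    intro t x hx
    have hr : ∀ i, b.repr (t • x) i = t * b.repr x i := by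
      intro i; rw [map_smul]; rfl
    rcases le_or_gt 0 t with ht | ht
    · rcases hx with hx | hx
      · left; intro i; rw [hr]; exact mul_nonneg ht (hx i)
      · right; intro i; rw [hr]; exact mul_nonpos_of_nonneg_of_nonpos ht (hx i)
    · rcases hx with hx | hx
      · right; intro i; rw [hr]; exact mul_nonpos_of_nonpos_of_nonneg ht.le (hx i)
      · left; intro i; rw [hr]; nlinarith [hx i]
  -- the closed saturated set N in projective space
  set q : {v : Fin (2 * n) → ℝ // v ≠ 0} → Projectivization ℝ (Fin (2 * n) → ℝ) :=
    fun x => Projectivization.mk ℝ x.1 x.2 with hq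
  have hqc : Continuous q := continuous_quot_mk
  have hqm : Topology.IsQuotientMap q := isQuotientMap_quot_mk
  set N : Set (Projectivization ℝ (Fin (2 * n) → ℝ)) :=
    q '' {x : {v : Fin (2 * n) → ℝ // v ≠ 0} | (x : Fin (2 * n) → ℝ) ∈ S} with hN
  have hsat : ∀ (y : {v : Fin (2 * n) → ℝ // v ≠ 0}) (w : Fin (2 * n) → ℝ) (hw : w ≠ 0),
      (y : Fin (2 * n) → ℝ) ∈ S → q y = Projectivization.mk ℝ w hw → w ∈ S := by
    intro y w hw hy hQ
    obtain ⟨t, ht⟩ := (mk_eq_mk_iff ℝ y.1 w y.2 hw).mp hQ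
    rw [Units.smul_def] at ht
    have h2 := hSsmul ((t⁻¹ : ℝˣ) : ℝ) y.1 hy
    rwa [← ht, smul_smul, Units.inv_mul, one_smul] at h2
  have hNclosed : IsClosed N := by
    rw [← hqm.isClosed_preimage]
    have hpre : q ⁻¹' N = {x : {v : Fin (2 * n) → ℝ // v ≠ 0} | (x : Fin (2 * n) → ℝ) ∈ S} := by
      ext x
      constructor
      · rintro ⟨y, hy, hyx⟩
        exact hsat y x.1 x.2 hy hyx
      · intro hx
        exact ⟨x, hx, rfl⟩
    rw [hpre]
    exact hSclosed.preimage continuous_subtype_val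
  have hBN : symplSimplex n e ⊆ N := by
    rintro P ⟨v, hv, ⟨c, hcpos, hvc⟩, hP⟩
    refine ⟨⟨v, hv⟩, ?_, hP.symm⟩
    left
    intro i
    have hrepr : ⇑(b.repr v) = c := by
      rw [hvc, show (∑ i, c i • e i) = ∑ i, c i • b i from
        Finset.sum_congr rfl fun i _ => by rw [hbe]]
      exact b.repr_sum_self c
    rw [hrepr]
    exact (hcpos i).le
  have hclosureN : closure (symplSimplex n e) ⊆ N := closure_minimal hBN hNclosed
  have hmemN : ∀ Q ∈ N, ∀ (w : Fin (2 * n) → ℝ) (hw : w ≠ 0),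
      Q = Projectivization.mk ℝ w hw → w ∈ S := by
    rintro Q ⟨y, hy, rfl⟩ w hw hQ
    exact hsat y w hw hy hQ
  -- every nonnegative combination is in the closure of the simplex
  have hclosB : ∀ d : Fin (2 * n) → ℝ, (∀ i, 0 ≤ d i) → d ≠ 0 →
      ∀ hw : (∑ i, d i • e i) ≠ 0,
      Projectivization.mk ℝ (∑ i, d i • e i) hw ∈ closure (symplSimplex n e) := by
    intro d hd hd0 hw
    obtain ⟨i0, hi0⟩ : ∃ i, d i ≠ 0 := by
      by_contra hno; push_neg at hno; exact hd0 (funext hno)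
    set γ : ℝ → (Fin (2 * n) → ℝ) := fun t => ∑ i, (d i + t) • e i with hγ
    have hγ0 : γ 0 = ∑ i, d i • e i := by simp [hγ]
    have hγpos : ∀ t : ℝ, 0 < t → γ t ≠ 0 := by
      intro t ht h0
      have h1 := Fintype.linearIndependent_iff.mp hli (fun i => d i + t) h0 i0
      have h2 := hd i0
      have h1 : d i0 + t = 0 := h1
      linarith
    have hγcont : Continuous γ := by
      apply continuous_finset_sum
      intro i _
      exact (continuous_const.add continuous_id).smul continuous_const
    set F : ℝ → {v : Fin (2 * n) → ℝ // v ≠ 0} := fun t =>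
      if h : γ t ≠ 0 then ⟨γ t, h⟩ else ⟨∑ i, d i • e i, hw⟩ with hF
    have hFval : ∀ t : ℝ, 0 < t → ((F t : {v : Fin (2 * n) → ℝ // v ≠ 0}) : Fin (2 * n) → ℝ)
        = γ t := by
      intro t ht
      rw [hF]
      simp only [dif_pos (hγpos t ht)]
    have hFtend : Filter.Tendsto F (nhdsWithin 0 (Set.Ioi 0))
        (nhds (⟨∑ i, d i • e i, hw⟩ : {v : Fin (2 * n) → ℝ // v ≠ 0})) := by
      rw [tendsto_subtype_rng]
      have h1 : Filter.Tendsto γ (nhdsWithin 0 (Set.Ioi 0)) (nhds (∑ i, d i • e i)) := by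
        have h2 := hγcont.tendsto 0
        rw [hγ0] at h2
        exact h2.mono_left nhdsWithin_le_nhds
      refine h1.congr' ?_
      filter_upwards [self_mem_nhdsWithin] with t ht
      exact (hFval t ht).symm
    have hqF : Filter.Tendsto (fun t => q (F t)) (nhdsWithin 0 (Set.Ioi 0))
        (nhds (Projectivization.mk ℝ (∑ i, d i • e i) hw)) :=
      (hqc.tendsto _).comp hFtend
    refine mem_closure_of_tendsto hqF ?_
    filter_upwards [self_mem_nhdsWithin] with t ht
    refine ⟨γ t, hγpos t ht, ⟨fun i => d i + t, fun i => by
      have h1 := hd i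
      have h2 : (0 : ℝ) < t := ht
      show 0 < d i + t
      linarith, rfl⟩, ?_⟩
    rw [hq]
    simp only [hF, dif_pos (hγpos t ht)]
  -- main set equality
  ext P
  simp only [symplDual, symplSimplex, Set.mem_setOf_eq]
  constructor
  · rintro ⟨v, hv, hP, H⟩
    have hva : v = ∑ i, b'.repr v i • f i := by
      have h1 := b'.sum_repr v
      simp only [hbf] at h1
      exact h1.symm
    set a : Fin (2 * n) → ℝ := fun i => b'.repr v i with ha
    have key : ∀ d : Fin (2 * n) → ℝ, (∀ i, 0 ≤ d i) → d ≠ 0 → ∑ i, a i * d i ≠ 0 := by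
      intro d hd hd0
      have hwne : (∑ i, d i • e i) ≠ 0 := hnz_e d hd0
      have hQ := hclosB d hd hd0 hwne
      have h1 := H _ hQ _ hwne rfl
      rw [hva, hpair] at h1
      exact h1
    have hane : ∀ i, a i ≠ 0 := by
      intro i hai
      refine key (Pi.single i 1) (fun j => ?_) (fun h => ?_) ?_
      · by_cases h : j = i <;> simp [Pi.single_apply, h]
      · simpa using congrFun h i
      · simp only [Pi.single_apply, mul_ite, mul_one, mul_zero, Finset.sum_ite_eq',
          Finset.mem_univ, if_true]
        exact hai
    have hsign : (∀ i, 0 < a i) ∨ (∀ i, a i < 0) := by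
      by_contra hcon
      push_neg at hcon
      obtain ⟨⟨i, hi⟩, ⟨j, hj⟩⟩ := hcon
      have hi' : a i < 0 := lt_of_le_of_ne hi (hane i)
      have hj' : 0 < a j := lt_of_le_of_ne hj (Ne.symm (hane j))
      have hij : i ≠ j := by
        intro h; rw [h] at hi'; linarith
      set d : Fin (2 * n) → ℝ := Pi.single i (a j) + Pi.single j (-(a i)) with hd
      have hdnn : ∀ k, 0 ≤ d k := by
        intro k
        simp only [hd, Pi.add_apply, Pi.single_apply]
        by_cases h1 : k = i <;> by_cases h2 : k = j <;>
          simp [h1, h2, hij, Ne.symm hij] <;> linarith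
      have hdne : d ≠ 0 := by
        intro h
        have h1 := congrFun h i
        simp only [hd, Pi.add_apply, Pi.single_apply, if_pos rfl, if_neg hij, add_zero,
          Pi.zero_apply] at h1
        exact hj'.ne' h1
      refine key d hdnn hdne ?_
      simp only [hd, Pi.add_apply, mul_add, Finset.sum_add_distrib, Pi.single_apply, mul_ite,
        mul_zero, Finset.sum_ite_eq', Finset.mem_univ, if_true]
      ring
    rcases hsign with hpos | hneg
    · exact ⟨v, hv, ⟨a, hpos, hva⟩, hP⟩
    · refine ⟨-v, neg_ne_zero.mpr hv, ⟨fun i => -(a i), fun i => by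
        show 0 < -(a i); linarith [hneg i], ?_⟩, ?_⟩
      · rw [hva, show (∑ i, (-(a i)) • f i) = -∑ i, a i • f i from by
          rw [← Finset.sum_neg_distrib]; exact Finset.sum_congr rfl fun i _ => neg_smul _ _]
      · rw [hP]
        refine ((mk_eq_mk_iff ℝ _ _ hv (neg_ne_zero.mpr hv)).mpr ⟨-1, ?_⟩)
        simp [Units.smul_def]
  · rintro ⟨v, hv, ⟨c, hcpos, hvc⟩, hP⟩
    refine ⟨v, hv, hP, ?_⟩
    intro Q hQ w hw hQw
    have hwS : w ∈ S := hmemN Q (hclosureN hQ) w hw hQw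
    obtain ⟨d, hdeq, hdsign⟩ : ∃ d : Fin (2 * n) → ℝ, w = ∑ i, d i • e i ∧
        ((∀ i, 0 ≤ d i) ∨ (∀ i, d i ≤ 0)) := by
      refine ⟨fun i => b.repr w i, (hsum_e w).symm, ?_⟩
      rcases hwS with h | h
      · exact Or.inl h
      · exact Or.inr h
    obtain ⟨i0, hdi0⟩ : ∃ i, d i ≠ 0 := by
      by_contra hno
      push_neg at hno
      apply hw
      rw [hdeq]
      simp [hno]
    rw [hvc, hdeq, hpair]
    rcases hdsign with hpos | hneg
    · have h1 : 0 < ∑ i, c i * d i :=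
        Finset.sum_pos' (fun i _ => mul_nonneg (hcpos i).le (hpos i))
          ⟨i0, Finset.mem_univ _, mul_pos (hcpos i0) (lt_of_le_of_ne (hpos i0) (Ne.symm hdi0))⟩
      exact h1.ne'
    · have h1 : 0 < ∑ i, c i * (-(d i)) :=
        Finset.sum_pos' (fun i _ => mul_nonneg (hcpos i).le (by linarith [hneg i]))
          ⟨i0, Finset.mem_univ _, mul_pos (hcpos i0)
            (by have := hneg i0; cases (lt_or_eq_of_le this) with
              | inl h => linarith
              | inr h => exact absurd h hdi0)⟩
      have heq : ∑ i, c i * (-(d i)) = -∑ i, c i * d i := by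
        rw [← Finset.sum_neg_distrib]
        exact Finset.sum_congr rfl fun i _ => by ring
      intro h0
      rw [heq, h0, neg_zero] at h1
      exact lt_irrefl 0 h1
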